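/- Let p : ℂⁿ → ℂ be a nonconstant polynomial and Z = p⁻¹(0). Then there exists a constant C > 0 such that for every z ∈ ℂⁿ and every r ≥ 1, the (2n−2)-dimensional Hausdorff measure of Z ∩ B_r(z) is at most C·r^{2n−2}, where B_r(z) is the Euclidean ball of radius r and center z. (This is the quantitative content of the statement that every algebraic hypersurface has asymptotic upper density zero with respect to any Bargmann-Fock weight.) -/

import Mathlib

open MeasureTheory MvPolynomial
open scoped NNReal ENNReal
set_option synthInstance.maxHeartbeats 1000000
set_option maxHeartbeats 2000000

noncomputable instance (n : ℕ) : MeasurableSpace (EuclideanSpace ℂ (Fin n)) :=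
  MeasurableSpace.comap WithLp.ofLp MeasurableSpace.pi

instance (n : ℕ) : BorelSpace (EuclideanSpace ℂ (Fin n)) := PiLp.borelSpace 2

noncomputable section
variable {n : ℕ}




def Dp (p : MvPolynomial (Fin n) ℂ) (x : EuclideanSpace ℂ (Fin n)) :
    EuclideanSpace ℂ (Fin n) →L[ℂ] ℂ :=
  ∑ i, MvPolynomial.eval (fun k => x k) (MvPolynomial.pderiv i p) • (EuclideanSpace.proj i)

lemma Dp_apply (p : MvPolynomial (Fin n) ℂ) (x u : EuclideanSpace ℂ (Fin n)) :
    Dp p x u = ∑ i, MvPolynomial.eval (fun k => x k) (MvPolynomial.pderiv i p) * u i := by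
  simp [Dp]

theorem hasFDerivAt_evalp (p : MvPolynomial (Fin n) ℂ) (x : EuclideanSpace ℂ (Fin n)) :
    HasFDerivAt (fun w : EuclideanSpace ℂ (Fin n) => MvPolynomial.eval (fun i => w i) p)
      (Dp p x) x := by
  induction p using MvPolynomial.induction_on with
  | C a =>
      simp only [eval_C]
      have : Dp (C a : MvPolynomial (Fin n) ℂ) x = 0 := by
        ext u; simp [Dp_apply]
      rw [this]
      exact hasFDerivAt_const _ _
  | add p q hp hq =>
      have : Dp (p + q) x = Dp p x + Dp q x := by
        ext u; simp [Dp_apply, add_mul, Finset.sum_add_distrib]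
      simp only [map_add, this]
      exact hp.add hq
  | mul_X p i hp =>
      have hXi : HasFDerivAt (fun w : EuclideanSpace ℂ (Fin n) => w i)
          (EuclideanSpace.proj i : EuclideanSpace ℂ (Fin n) →L[ℂ] ℂ) x :=
        (EuclideanSpace.proj (𝕜 := ℂ) i).hasFDerivAt
      have hmul := hp.mul' hXi
      have key : ∀ k : Fin n, MvPolynomial.eval (fun k => x k) (pderiv k (p * X i))
          = (MvPolynomial.eval (fun k => x k) (pderiv k p)) * x i
            + (if k = i then MvPolynomial.eval (fun k => x k) p else 0) := by
        intro k
        rw [pderiv_mul]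
        by_cases h : k = i
        · subst h; simp [eval_X, pderiv_X_self]
        · have : pderiv k (X i : MvPolynomial (Fin n) ℂ) = 0 :=
            pderiv_X_of_ne (Ne.symm h)
          simp [eval_X, this, h]
      have hDp : Dp (p * X i) x
          = (MvPolynomial.eval (fun k => x k) p) • (EuclideanSpace.proj i)
            + (Dp p x).smulRight (x i) := by
        ext u
        simp only [Dp_apply, ContinuousLinearMap.add_apply, ContinuousLinearMap.smul_apply,
          ContinuousLinearMap.smulRight_apply, Dp_apply, key,
          add_mul, Finset.sum_add_distrib, ite_mul, zero_mul, smul_eq_mul]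
        rw [Finset.sum_ite_eq' Finset.univ i (fun k => MvPolynomial.eval (fun k => x k) p * u k)]
        simp only [Finset.mem_univ, if_true]
        rw [add_comm, Finset.sum_mul]
        congr 1
        · exact Finset.sum_congr rfl fun k _ => by ring
      have hfun : (fun w : EuclideanSpace ℂ (Fin n) => MvPolynomial.eval (fun i' => w i') (p * X i))
          = fun w : EuclideanSpace ℂ (Fin n) =>
            (MvPolynomial.eval (fun i' => w i') p) * w i := by
        funext w; simp [eval_X]
      rw [hfun, hDp]
      exact hmul

lemma continuous_evalp (p : MvPolynomial (Fin n) ℂ) :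
    Continuous (fun w : EuclideanSpace ℂ (Fin n) => MvPolynomial.eval (fun i => w i) p) :=
  continuous_iff_continuousAt.2 fun x => (hasFDerivAt_evalp p x).continuousAt

lemma continuous_Dp (p : MvPolynomial (Fin n) ℂ) :
    Continuous (fun x : EuclideanSpace ℂ (Fin n) => Dp p x) := by
  refine continuous_finset_sum _ (fun i _ => ?_)
  exact (continuous_evalp (pderiv i p)).smul continuous_const

/-- the projection deleting the `j`-th coordinate (as a map to the same space) -/
def pj (j : Fin n) : EuclideanSpace ℂ (Fin n) →L[ℂ] EuclideanSpace ℂ (Fin n) :=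
  ContinuousLinearMap.id ℂ _ -
    (EuclideanSpace.proj j).smulRight (EuclideanSpace.single j 1)

lemma pj_apply (j : Fin n) (x : EuclideanSpace ℂ (Fin n)) (i : Fin n) :
    pj j x i = if i = j then 0 else x i := by
  simp only [pj, ContinuousLinearMap.sub_apply, ContinuousLinearMap.id_apply,
    ContinuousLinearMap.smulRight_apply]
  rw [PiLp.sub_apply, PiLp.smul_apply, EuclideanSpace.single_apply]
  by_cases h : i = j
  · subst h; simp
  · simp [h]

lemma coord_le_norm (x : EuclideanSpace ℂ (Fin n)) (i : Fin n) : ‖x i‖ ≤ ‖x‖ := by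
  have := EuclideanSpace.norm_eq x
  nlinarith [Real.sq_sqrt (Finset.sum_nonneg (fun k (_ : k ∈ Finset.univ) => sq_nonneg ‖x k‖)),
    Finset.single_le_sum (f := fun k => ‖x k‖^2) (fun k _ => sq_nonneg ‖x k‖) (Finset.mem_univ i),
    norm_nonneg (x i), norm_nonneg x, Real.sqrt_nonneg (∑ k, ‖x k‖^2)]

lemma norm_pj_le (j : Fin n) (x : EuclideanSpace ℂ (Fin n)) : ‖pj j x‖ ≤ ‖x‖ := by
  rw [EuclideanSpace.norm_eq, EuclideanSpace.norm_eq]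
  apply Real.sqrt_le_sqrt
  refine Finset.sum_le_sum (fun i _ => ?_)
  rw [pj_apply]
  by_cases h : i = j <;> simp [h, sq_nonneg]

lemma norm_le_pj_add (j : Fin n) (x : EuclideanSpace ℂ (Fin n)) :
    ‖x‖ ≤ ‖pj j x‖ + ‖x j‖ := by
  have hx : x = pj j x + EuclideanSpace.single j (x j) := by
    ext i
    rw [PiLp.add_apply, pj_apply, EuclideanSpace.single_apply]
    by_cases h : i = j
    · subst h; simp
    · simp [h]
  calc ‖x‖ = ‖pj j x + EuclideanSpace.single j (x j)‖ := by rw [← hx]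
    _ ≤ ‖pj j x‖ + ‖EuclideanSpace.single j (x j)‖ := norm_add_le _ _
    _ = ‖pj j x‖ + ‖x j‖ := by rw [EuclideanSpace.norm_single]

/-- The key two-point Lipschitz estimate near a point where the `j`-th partial derivative
is maximal and nonzero. -/
lemma two_point_estimate (p : MvPolynomial (Fin n) ℂ) (ζ : EuclideanSpace ℂ (Fin n)) (j : Fin n)
    (hj : MvPolynomial.eval (fun k => ζ k) (MvPolynomial.pderiv j p) ≠ 0)
    (hmax : ∀ i, ‖MvPolynomial.eval (fun k => ζ k) (MvPolynomial.pderiv i p)‖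
      ≤ ‖MvPolynomial.eval (fun k => ζ k) (MvPolynomial.pderiv j p)‖) :
    ∃ ρ, 0 < ρ ∧ ∀ w v : EuclideanSpace ℂ (Fin n), w ∈ Metric.ball ζ ρ → v ∈ Metric.ball ζ ρ →
      MvPolynomial.eval (fun k => w k) p = 0 → MvPolynomial.eval (fun k => v k) p = 0 →
      ‖w - v‖ ≤ (2*(n:ℝ)+2) * ‖pj j w - pj j v‖ := by
  set A : Fin n → ℂ := fun i => MvPolynomial.eval (fun k => ζ k) (MvPolynomial.pderiv i p) with hA
  set M : ℝ := ‖A j‖ with hM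
  have hM0 : 0 < M := norm_pos_iff.2 hj
  -- find ρ by continuity of Dp
  have hcont : ContinuousAt (fun x => Dp p x) ζ := (continuous_Dp p).continuousAt
  rw [Metric.continuousAt_iff] at hcont
  obtain ⟨ρ, hρ0, hρ⟩ := hcont (M/2) (by linarith)
  refine ⟨ρ, hρ0, fun w v hw hv hfw hfv => ?_⟩
  have hbnd : ∀ x ∈ Metric.ball ζ ρ,
      ‖(Dp p x).restrictScalars ℝ - (Dp p ζ).restrictScalars ℝ‖ ≤ M/2 := by
    intro x hx
    refine ContinuousLinearMap.opNorm_le_bound _ (by linarith) (fun u => ?_)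
    have h1 : ((Dp p x).restrictScalars ℝ - (Dp p ζ).restrictScalars ℝ) u
        = (Dp p x - Dp p ζ) u := rfl
    rw [h1]
    calc ‖(Dp p x - Dp p ζ) u‖ ≤ ‖Dp p x - Dp p ζ‖ * ‖u‖ :=
          (Dp p x - Dp p ζ).le_opNorm u
      _ ≤ M/2 * ‖u‖ := by
          have := hρ (Metric.mem_ball.1 hx)
          rw [dist_eq_norm] at this
          exact mul_le_mul_of_nonneg_right this.le (norm_nonneg u)
  have hmvt := Convex.norm_image_sub_le_of_norm_hasFDerivWithin_le'
      (f := fun w : EuclideanSpace ℂ (Fin n) => MvPolynomial.eval (fun i => w i) p)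
      (f' := fun x => (Dp p x).restrictScalars ℝ)
      (φ := (Dp p ζ).restrictScalars ℝ) (C := M/2) (s := Metric.ball ζ ρ)
      (fun x _ => ((hasFDerivAt_evalp p x).restrictScalars ℝ).hasFDerivWithinAt)
      hbnd (convex_ball ζ ρ) hv hw
  have h0 : ‖Dp p ζ (w - v)‖ ≤ M/2 * ‖w - v‖ := by
    have hr : ((Dp p ζ).restrictScalars ℝ) (w - v) = Dp p ζ (w - v) := rfl
    simpa [hfw, hfv, hr, norm_sub_rev] using hmvt
  -- scalar estimate
  set u := w - v with hu
  have hsum : Dp p ζ u = A j * u j + ∑ i ∈ Finset.univ.erase j, A i * u i := by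
    rw [Dp_apply, ← Finset.add_sum_erase _ _ (Finset.mem_univ j)]
  have herase : ∀ i ∈ Finset.univ.erase j, ‖A i * u i‖ ≤ M * ‖pj j u‖ := by
    intro i hi
    have hij : i ≠ j := Finset.ne_of_mem_erase hi
    have : ‖u i‖ = ‖pj j u i‖ := by rw [pj_apply]; simp [hij]
    rw [norm_mul, this]
    exact mul_le_mul (hmax i) (coord_le_norm _ i) (norm_nonneg _) (le_of_lt hM0)
  have hAj : M * ‖u j‖ ≤ M/2 * ‖u‖ + (n:ℝ) * (M * ‖pj j u‖) := by
    have h2 : ‖A j * u j‖ ≤ ‖Dp p ζ u‖ + ‖∑ i ∈ Finset.univ.erase j, A i * u i‖ := by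
      rw [hsum]
      calc ‖A j * u j‖ = ‖(A j * u j + ∑ i ∈ Finset.univ.erase j, A i * u i)
            - ∑ i ∈ Finset.univ.erase j, A i * u i‖ := by ring_nf
        _ ≤ _ := norm_sub_le _ _
    have h3 : ‖∑ i ∈ Finset.univ.erase j, A i * u i‖ ≤ (n:ℝ) * (M * ‖pj j u‖) := by
      calc ‖∑ i ∈ Finset.univ.erase j, A i * u i‖
          ≤ ∑ i ∈ Finset.univ.erase j, ‖A i * u i‖ := norm_sum_le _ _
        _ ≤ ∑ _i ∈ Finset.univ.erase j, M * ‖pj j u‖ := Finset.sum_le_sum herase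
        _ = (Finset.univ.erase j).card * (M * ‖pj j u‖) := by
            rw [Finset.sum_const, nsmul_eq_mul]
        _ ≤ (n:ℝ) * (M * ‖pj j u‖) := by
            have hc : ((Finset.univ.erase j).card : ℝ) ≤ (n:ℝ) := by
              have := Finset.card_erase_le (a := j) (s := (Finset.univ : Finset (Fin n)))
              have h4 : (Finset.univ : Finset (Fin n)).card = n := Finset.card_univ.trans (Fintype.card_fin n)
              exact_mod_cast le_trans this (le_of_eq h4)
            have h5 : 0 ≤ M * ‖pj j u‖ := mul_nonneg hM0.le (norm_nonneg _)
            exact mul_le_mul_of_nonneg_right hc h5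
    rw [norm_mul] at h2
    calc M * ‖u j‖ ≤ ‖Dp p ζ u‖ + ‖∑ i ∈ Finset.univ.erase j, A i * u i‖ := h2
      _ ≤ M/2 * ‖u‖ + (n:ℝ) * (M * ‖pj j u‖) := add_le_add h0 h3
  have hnorm : ‖u‖ ≤ ‖pj j u‖ + ‖u j‖ := norm_le_pj_add j u
  -- solve for ‖u j‖
  have huj : ‖u j‖ ≤ (2*(n:ℝ)+1) * ‖pj j u‖ := by nlinarith [norm_nonneg (pj j u), norm_nonneg (u j)]
  have hpj : pj j u = pj j w - pj j v := by rw [hu, map_sub]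
  calc ‖w - v‖ ≤ ‖pj j u‖ + ‖u j‖ := hnorm
    _ ≤ ‖pj j u‖ + (2*(n:ℝ)+1) * ‖pj j u‖ := add_le_add le_rfl huj
    _ = (2*(n:ℝ)+2) * ‖pj j u‖ := by ring
    _ = (2*(n:ℝ)+2) * ‖pj j w - pj j v‖ := by rw [hpj]




lemma finsupp_sum_eq (s : Fin n →₀ ℕ) : (s.sum fun _ e => e) = ∑ i, s i := by
  rw [Finsupp.sum_fintype]; simp

lemma totalDegree_pderiv_lt (p : MvPolynomial (Fin n) ℂ) (hp : 0 < p.totalDegree) (j : Fin n) :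
    (pderiv j p).totalDegree < p.totalDegree := by
  have hrw : (pderiv j) p = ∑ v ∈ p.support, (pderiv j) (monomial v (coeff v p)) := by
    conv_lhs => rw [← p.support_sum_monomial_coeff]
    exact map_sum _ _ _
  rw [hrw]
  refine lt_of_le_of_lt (totalDegree_finset_sum _ _) ?_
  rw [Finset.sup_lt_iff hp]
  intro s hs
  rw [pderiv_monomial]
  by_cases h0 : s j = 0
  · simp [h0]  -- monomial _ (c * 0) = 0, totalDegree 0 = 0
    exact hp
  · refine lt_of_le_of_lt (totalDegree_monomial_le _ _) ?_
    have h1 : ((s - Finsupp.single j 1).sum fun _ e => e) < s.sum fun _ e => e := by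
      rw [finsupp_sum_eq, finsupp_sum_eq]
      rw [Finset.sum_congr rfl (fun i (_ : i ∈ Finset.univ) => Finsupp.tsub_apply s (Finsupp.single j 1) i)]
      rw [← Finset.add_sum_erase _ _ (Finset.mem_univ j),
        ← Finset.add_sum_erase _ (fun i => s i) (Finset.mem_univ j)]
      have : ∑ i ∈ Finset.univ.erase j, (s i - (Finsupp.single j 1) i)
          = ∑ i ∈ Finset.univ.erase j, s i :=
        Finset.sum_congr rfl (fun i hi => by
          rw [Finsupp.single_apply, if_neg (Ne.symm (Finset.ne_of_mem_erase hi))]; rfl)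
      rw [this]
      have h2 : (Finsupp.single j 1) j = 1 := Finsupp.single_eq_same
      rw [h2]
      omega
    exact lt_of_lt_of_le h1 (le_totalDegree hs)

lemma exists_pderiv_ne_zero (p : MvPolynomial (Fin n) ℂ) (hp : 0 < p.totalDegree) :
    ∃ j, pderiv j p ≠ 0 := by
  -- pick a top-degree monomial
  have hne : p.support.Nonempty := by
    rcases Finset.eq_empty_or_nonempty p.support with h | h
    · exfalso; have : p = 0 := support_eq_empty.1 h
      rw [this] at hp; simp at hp
    · exact h
  obtain ⟨s₀, hs₀, hdeg⟩ : ∃ s₀ ∈ p.support, p.totalDegree = s₀.sum fun _ e => e := by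
    obtain ⟨s₀, hs₀mem, h⟩ := Finset.exists_mem_eq_sup p.support hne (fun s => s.sum fun _ e => e)
    exact ⟨s₀, hs₀mem, h⟩
  have hsum : 0 < ∑ i, s₀ i := by rw [← finsupp_sum_eq, ← hdeg]; exact hp
  obtain ⟨j, hj⟩ : ∃ j, s₀ j ≠ 0 := by
    by_contra h
    push_neg at h
    simp only [h] at hsum
    simp at hsum
  refine ⟨j, fun hzero => ?_⟩
  have hc : coeff (s₀ - Finsupp.single j 1) (pderiv j p) = coeff s₀ p * (s₀ j : ℂ) := by
    have hrw : (pderiv j) p = ∑ v ∈ p.support, (pderiv j) (monomial v (coeff v p)) := by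
      conv_lhs => rw [← p.support_sum_monomial_coeff]
      exact map_sum _ _ _
    rw [hrw]
    have : ∀ v, (pderiv j) (monomial v (coeff v p)) = monomial (v - Finsupp.single j 1) (coeff v p * v j) :=
      fun v => pderiv_monomial
    rw [Finset.sum_congr rfl (fun v _ => this v)]
    rw [MvPolynomial.coeff_sum]
    rw [Finset.sum_eq_single s₀]
    · rw [coeff_monomial, if_pos rfl]
    · intro v hv hvne
      rw [coeff_monomial]
      by_cases h0 : v j = 0
      · simp [h0]
      · rw [if_neg]
        intro heq
        apply hvne
        ext i
        by_cases hij : i = j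
        · subst hij
          have h1 := congrFun (congrArg (fun (f : Fin n →₀ ℕ) => (f : Fin n → ℕ)) heq) i
          simp only [Finsupp.coe_tsub, Pi.sub_apply, Finsupp.single_eq_same] at h1
          omega
        · have h1 := congrFun (congrArg (fun (f : Fin n →₀ ℕ) => (f : Fin n → ℕ)) heq) i
          simp only [Finsupp.coe_tsub, Pi.sub_apply, Finsupp.single_apply,
            if_neg (Ne.symm hij)] at h1
          omega
    · intro habs
      exact absurd hs₀ habs
  rw [hzero] at hc
  simp only [coeff_zero] at hc
  have hcoeff : coeff s₀ p ≠ 0 := mem_support_iff.1 hs₀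
  have : (s₀ j : ℂ) ≠ 0 := Nat.cast_ne_zero.2 hj
  exact this (by
    rcases mul_eq_zero.1 hc.symm with h | h
    · exact absurd h hcoeff
    · exact h)

/-- specialization of `p` along the `j`-th coordinate -/
def phi (p : MvPolynomial (Fin n) ℂ) (j : Fin n) (y : Fin n → ℂ) : Polynomial ℂ :=
  aeval (fun i => if i = j then Polynomial.X else Polynomial.C (y i)) p

lemma phi_eval (p : MvPolynomial (Fin n) ℂ) (j : Fin n) (y : Fin n → ℂ) (t : ℂ) :
    (phi p j y).eval t = MvPolynomial.eval (fun i => if i = j then t else y i) p := by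
  induction p using MvPolynomial.induction_on with
  | C a => simp [phi]
  | add p q hp hq => simp only [phi, map_add, Polynomial.eval_add] at *; rw [hp, hq]
  | mul_X p i hp =>
      simp only [phi, map_mul, aeval_X, Polynomial.eval_mul, eval_X] at *
      rw [hp]
      by_cases h : i = j <;> simp [h]

lemma phi_derivative (p : MvPolynomial (Fin n) ℂ) (j : Fin n) (y : Fin n → ℂ) :
    (phi p j y).derivative = phi (pderiv j p) j y := by
  induction p using MvPolynomial.induction_on with
  | C a => simp [phi]
  | add p q hp hq => simp only [phi, map_add, Polynomial.derivative_add] at *; rw [hp, hq]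
  | mul_X p i hp =>
      simp only [phi, map_mul, aeval_X] at *
      rw [Polynomial.derivative_mul, hp, pderiv_mul, map_add, map_mul, aeval_X, map_mul]
      by_cases h : i = j
      · subst h
        rw [pderiv_X_self]
        simp
      · rw [pderiv_X_of_ne h]
        simp [h]

lemma phi_natDegree (p : MvPolynomial (Fin n) ℂ) (j : Fin n) (y : Fin n → ℂ) :
    (phi p j y).natDegree ≤ p.totalDegree := by
  rw [phi, aeval_def, eval₂_eq]
  refine Polynomial.natDegree_sum_le_of_forall_le _ _ (fun s hs => ?_)
  refine le_trans Polynomial.natDegree_mul_le ?_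
  have h1 : ((algebraMap ℂ (Polynomial ℂ)) (coeff s p)).natDegree = 0 := by
    simp [Polynomial.natDegree_C]
  rw [h1, zero_add]
  refine le_trans (Polynomial.natDegree_prod_le _ _) ?_
  have h2 : ∀ i ∈ s.support,
      ((if i = j then Polynomial.X else Polynomial.C (y i)) ^ s i).natDegree
        ≤ if i = j then s i else 0 := by
    intro i _
    by_cases h : i = j
    · subst h
      simp [Polynomial.natDegree_X_pow]
    · simp [h, Polynomial.natDegree_pow, Polynomial.natDegree_C]
  refine le_trans (Finset.sum_le_sum h2) ?_
  have h3 : ∑ i ∈ s.support, (if i = j then s i else 0) ≤ s j := by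
    by_cases hj : j ∈ s.support
    · rw [Finset.sum_ite_eq' s.support j (fun i => s i), if_pos hj]
    · rw [Finset.sum_ite_eq' s.support j (fun i => s i), if_neg hj]
      exact Nat.zero_le _
  refine le_trans h3 (le_trans ?_ (le_totalDegree hs))
  rw [finsupp_sum_eq]
  exact Finset.single_le_sum (f := fun i => s i) (fun i _ => Nat.zero_le _) (Finset.mem_univ j)

lemma phi_card_roots (p : MvPolynomial (Fin n) ℂ) (j : Fin n) (y : Fin n → ℂ) :
    (phi p j y).roots.toFinset.card ≤ p.totalDegree :=
  le_trans (Multiset.toFinset_card_le _)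
    (le_trans (Polynomial.card_roots' _) (phi_natDegree p j y))




lemma euclidean_ball_bound (m : ℕ) : ∃ c : ℝ≥0, ∀ r : ℝ, 0 ≤ r →
    μH[(m : ℝ)] (Metric.closedBall (0 : EuclideanSpace ℝ (Fin m)) r)
      ≤ c * ENNReal.ofReal ((2*r)^m) := by
  set K0 : ℝ≥0 := (m : ℝ≥0) ^ ((1/(2:ℝ≥0∞))).toReal with hK0
  have hanti : AntilipschitzWith K0 (WithLp.equiv 2 (Fin m → ℝ)) := by
    have := PiLp.antilipschitzWith_ofLp 2 (fun _ : Fin m => ℝ)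
    simp [hK0, Fintype.card_fin] at this ⊢; exact this
  have hlip : LipschitzWith K0 (WithLp.equiv 2 (Fin m → ℝ)).symm := by
    intro a b
    have h1 := hanti ((WithLp.equiv 2 (Fin m → ℝ)).symm a) ((WithLp.equiv 2 (Fin m → ℝ)).symm b)
    simpa using h1
  refine ⟨K0 ^ m, fun r hr => ?_⟩
  have hpi : (μH[(m:ℝ)] : Measure (Fin m → ℝ)) = volume := by
    have := hausdorffMeasure_pi_real (ι := Fin m)
    rwa [Fintype.card_fin] at this
  have hsub : Metric.closedBall (0 : EuclideanSpace ℝ (Fin m)) r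
      ⊆ (WithLp.equiv 2 (Fin m → ℝ)).symm '' (Metric.closedBall (0 : Fin m → ℝ) r) := by
    intro x hx
    refine ⟨WithLp.equiv 2 (Fin m → ℝ) x, ?_, Equiv.symm_apply_apply _ _⟩
    rw [Metric.mem_closedBall] at hx ⊢
    have h2 := (PiLp.lipschitzWith_ofLp 2 (fun _ : Fin m => ℝ)).dist_le_mul x 0
    simpa using le_trans h2 (by simpa using hx)
  calc μH[(m:ℝ)] (Metric.closedBall (0 : EuclideanSpace ℝ (Fin m)) r)
      ≤ μH[(m:ℝ)] ((WithLp.equiv 2 (Fin m → ℝ)).symm '' (Metric.closedBall (0 : Fin m → ℝ) r)) :=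
        measure_mono hsub
    _ ≤ (K0 : ℝ≥0∞) ^ (m:ℝ) * μH[(m:ℝ)] (Metric.closedBall (0 : Fin m → ℝ) r) :=
        hlip.hausdorffMeasure_image_le (by positivity) _
    _ = (K0 : ℝ≥0∞) ^ (m:ℝ) * ENNReal.ofReal ((2*r)^m) := by
        rw [hpi, Real.volume_pi_closedBall 0 hr, Fintype.card_fin]
    _ = ((K0 ^ m : ℝ≥0) : ℝ≥0∞) * ENNReal.ofReal ((2*r)^m) := by
        rw [ENNReal.coe_pow, ← ENNReal.rpow_natCast]

lemma hyperplane_bound (n : ℕ) (j : Fin n) : ∃ c : ℝ≥0,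
    ∀ (z' : EuclideanSpace ℂ (Fin n)), z' j = 0 → ∀ r : ℝ, 0 ≤ r →
    μH[((2*n-2 : ℕ) : ℝ)] ({w : EuclideanSpace ℂ (Fin n) | w j = 0} ∩ Metric.closedBall z' r)
      ≤ c * ENNReal.ofReal ((2*r)^(2*n-2)) := by
  letI : InnerProductSpace ℝ (EuclideanSpace ℂ (Fin n)) :=
    InnerProductSpace.rclikeToReal ℂ _
  set L : EuclideanSpace ℂ (Fin n) →ₗ[ℝ] ℂ :=
    ((EuclideanSpace.proj j : EuclideanSpace ℂ (Fin n) →L[ℂ] ℂ).restrictScalars ℝ).toLinearMap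
    with hL
  set K : Submodule ℝ (EuclideanSpace ℂ (Fin n)) := LinearMap.ker L with hK
  have hLapp : ∀ w, L w = w j := fun w => rfl
  have hLsurj : Function.Surjective L := by
    intro c
    refine ⟨EuclideanSpace.single j c, ?_⟩
    rw [hLapp]
    simp [EuclideanSpace.single_apply]
  have hrankE : Module.finrank ℝ (EuclideanSpace ℂ (Fin n)) = 2 * n := by
    have h1 : Module.finrank ℂ (EuclideanSpace ℂ (Fin n)) = n := finrank_euclideanSpace_fin
    have h2 := Module.finrank_mul_finrank ℝ ℂ (EuclideanSpace ℂ (Fin n))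
    rw [Complex.finrank_real_complex, h1] at h2
    omega
  have hrankK : Module.finrank ℝ K = 2*n - 2 := by
    have h3 := LinearMap.finrank_range_add_finrank_ker L
    rw [LinearMap.range_eq_top.2 hLsurj, finrank_top, Complex.finrank_real_complex, hrankE, ← hK] at h3
    omega
  obtain ⟨c, hc⟩ := euclidean_ball_bound (2*n-2)
  refine ⟨c, fun z' hz' r hr => ?_⟩
  set b : OrthonormalBasis (Fin (2*n-2)) ℝ K :=
    (stdOrthonormalBasis ℝ K).reindex (finCongr hrankK) with hb
  set ψ : EuclideanSpace ℝ (Fin (2*n-2)) → EuclideanSpace ℂ (Fin n) :=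
    fun x => z' + ((b.repr.symm x : K) : EuclideanSpace ℂ (Fin n)) with hψ
  have hiso : Isometry ψ := by
    apply Isometry.of_dist_eq
    intro a bb
    rw [hψ]
    simp only [dist_add_left]
    have h1 : dist ((b.repr.symm a : K) : EuclideanSpace ℂ (Fin n))
        ((b.repr.symm bb : K) : EuclideanSpace ℂ (Fin n))
        = dist (b.repr.symm a) (b.repr.symm bb) := rfl
    rw [h1, b.repr.symm.dist_map]
  have hsub : {w : EuclideanSpace ℂ (Fin n) | w j = 0} ∩ Metric.closedBall z' r
      ⊆ ψ '' (Metric.closedBall 0 r) := by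
    rintro w ⟨hwj, hwb⟩
    have hmem : w - z' ∈ K := by
      rw [hK, LinearMap.mem_ker, hLapp, PiLp.sub_apply, hwj, hz', sub_zero]
    refine ⟨b.repr ⟨w - z', hmem⟩, ?_, ?_⟩
    · rw [Metric.mem_closedBall, dist_zero_right, b.repr.norm_map]
      have h2 : ‖(⟨w - z', hmem⟩ : K)‖ = ‖w - z'‖ := rfl
      rw [h2, ← dist_eq_norm]
      exact Metric.mem_closedBall.1 hwb
    · rw [hψ]
      simp only [LinearIsometryEquiv.symm_apply_apply]
      simp
  calc μH[((2*n-2 : ℕ) : ℝ)] ({w : EuclideanSpace ℂ (Fin n) | w j = 0} ∩ Metric.closedBall z' r)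
      ≤ μH[((2*n-2 : ℕ) : ℝ)] (ψ '' (Metric.closedBall 0 r)) := measure_mono hsub
    _ = μH[((2*n-2 : ℕ) : ℝ)] (Metric.closedBall (0 : EuclideanSpace ℝ (Fin (2*n-2))) r) :=
        hiso.hausdorffMeasure_image (Or.inl (by positivity)) _
    _ ≤ c * ENNReal.ofReal ((2*r)^(2*n-2)) := hc r hr

lemma piece_injOn {n : ℕ} (j : Fin n) (P : Set (EuclideanSpace ℂ (Fin n))) (c : ℝ≥0)
    (hc : ∀ w ∈ P, ∀ v ∈ P, ‖w - v‖ ≤ (c:ℝ) * ‖pj j w - pj j v‖) :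
    Set.InjOn (pj j) P := by
  intro w hw v hv heq
  have := hc w hw v hv
  rw [heq, sub_self, norm_zero, mul_zero] at this
  have h2 : w - v = 0 := by
    rwa [← norm_le_zero_iff]
  rwa [sub_eq_zero] at h2

lemma piece_bound {n : ℕ} (j : Fin n) (P : Set (EuclideanSpace ℂ (Fin n))) (c : ℝ≥0)
    (hc : ∀ w ∈ P, ∀ v ∈ P, ‖w - v‖ ≤ (c:ℝ) * ‖pj j w - pj j v‖) (d : ℝ) (hd : 0 ≤ d) :
    μH[d] P ≤ (c:ℝ≥0∞) ^ d * μH[d] (pj j '' P) := by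
  rcases P.eq_empty_or_nonempty with h | hne
  · simp [h]
  set g := Function.invFunOn (pj j) P with hg
  have hmem : ∀ y ∈ pj j '' P, g y ∈ P ∧ pj j (g y) = y := by
    rintro y ⟨x, hx, hxy⟩
    exact ⟨Function.invFunOn_mem ⟨x, hx, hxy⟩, Function.invFunOn_eq ⟨x, hx, hxy⟩⟩
  have hlip : LipschitzOnWith c g (pj j '' P) := by
    rw [lipschitzOnWith_iff_dist_le_mul]
    intro y1 h1 y2 h2
    obtain ⟨hg1, he1⟩ := hmem y1 h1
    obtain ⟨hg2, he2⟩ := hmem y2 h2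
    rw [dist_eq_norm, dist_eq_norm]
    calc ‖g y1 - g y2‖ ≤ (c:ℝ) * ‖pj j (g y1) - pj j (g y2)‖ := hc _ hg1 _ hg2
      _ = (c:ℝ) * ‖y1 - y2‖ := by rw [he1, he2]
  have hPsub : P ⊆ g '' (pj j '' P) := by
    intro x hx
    have hyim : pj j x ∈ pj j '' P := ⟨x, hx, rfl⟩
    obtain ⟨hg1, he1⟩ := hmem _ hyim
    refine ⟨pj j x, hyim, ?_⟩
    have := hc x hx (g (pj j x)) hg1
    rw [he1, sub_self, norm_zero, mul_zero] at this
    have h2 : x - g (pj j x) = 0 := by rwa [← norm_le_zero_iff]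
    rw [sub_eq_zero] at h2
    exact h2.symm
  calc μH[d] P ≤ μH[d] (g '' (pj j '' P)) := measure_mono hPsub
    _ ≤ (c:ℝ≥0∞) ^ d * μH[d] (pj j '' P) := hlip.hausdorffMeasure_image_le hd

lemma tsum_measure_le_mult {α : Type*} [MeasurableSpace α] (μ : Measure α)
    (T : ℕ → Set α) (V : Set α) (hTm : ∀ i, MeasurableSet (T i)) (hTV : ∀ i, T i ⊆ V)
    (hV : MeasurableSet V) (d : ℕ)
    (hmult : ∀ y, ∀ F : Finset ℕ, (∀ i ∈ F, y ∈ T i) → F.card ≤ d) :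
    ∑' i, μ (T i) ≤ (d : ℝ≥0∞) * μ V := by
  classical
  have h1 : ∀ i, μ (T i) = ∫⁻ y, (T i).indicator (fun _ => (1:ℝ≥0∞)) y ∂μ := by
    intro i
    rw [lintegral_indicator_const (hTm i), one_mul]
  calc ∑' i, μ (T i) = ∑' i, ∫⁻ y, (T i).indicator (fun _ => (1:ℝ≥0∞)) y ∂μ := by
        exact tsum_congr h1
    _ = ∫⁻ y, ∑' i, (T i).indicator (fun _ => (1:ℝ≥0∞)) y ∂μ :=
        (lintegral_tsum (fun i => ((measurable_const.indicator (hTm i)).aemeasurable))).symm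
    _ ≤ ∫⁻ y, V.indicator (fun _ => (d:ℝ≥0∞)) y ∂μ := by
        refine lintegral_mono (fun y => ?_)
        by_cases hy : y ∈ V
        · rw [Set.indicator_of_mem hy]
          rw [ENNReal.tsum_eq_iSup_sum]
          refine iSup_le (fun F => ?_)
          have hcard : ((F.filter (fun i => y ∈ T i)).card : ℝ≥0∞) ≤ (d : ℝ≥0∞) := by
            have := hmult y (F.filter (fun i => y ∈ T i))
              (fun i hi => (Finset.mem_filter.1 hi).2)
            exact_mod_cast this
          refine le_trans (le_of_eq ?_) hcard
          rw [Finset.card_filter]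
          rw [Nat.cast_sum]
          refine Finset.sum_congr rfl (fun i _ => ?_)
          rw [Set.indicator_apply]
          by_cases h : y ∈ T i <;> simp [h]
        · have : ∀ i, (T i).indicator (fun _ => (1:ℝ≥0∞)) y = 0 := by
            intro i
            exact Set.indicator_of_notMem (fun hmem => hy (hTV i hmem)) _
          rw [Set.indicator_of_notMem hy]
          simp [this]
    _ = (d : ℝ≥0∞) * μ V := lintegral_indicator_const hV _

/-- The set where the `j`-th partial derivative is maximal and nonzero. -/
def Sj (p : MvPolynomial (Fin n) ℂ) (j : Fin n) : Set (EuclideanSpace ℂ (Fin n)) :=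
  {w | MvPolynomial.eval (fun i => w i) p = 0
    ∧ MvPolynomial.eval (fun i => w i) (pderiv j p) ≠ 0
    ∧ ∀ i, ‖MvPolynomial.eval (fun i' => w i') (pderiv i p)‖
        ≤ ‖MvPolynomial.eval (fun i' => w i') (pderiv j p)‖}

lemma Sj_measurable (p : MvPolynomial (Fin n) ℂ) (j : Fin n) : MeasurableSet (Sj p j) := by
  have h1 : MeasurableSet {w : EuclideanSpace ℂ (Fin n) | MvPolynomial.eval (fun i => w i) p = 0} :=
    (continuous_evalp p).measurable (measurableSet_singleton 0)
  have h2 : MeasurableSet {w : EuclideanSpace ℂ (Fin n) |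
      MvPolynomial.eval (fun i => w i) (pderiv j p) ≠ 0} :=
    ((continuous_evalp (pderiv j p)).measurable (measurableSet_singleton 0)).compl
  have h3 : MeasurableSet {w : EuclideanSpace ℂ (Fin n) |
      ∀ i, ‖MvPolynomial.eval (fun i' => w i') (pderiv i p)‖
        ≤ ‖MvPolynomial.eval (fun i' => w i') (pderiv j p)‖} := by
    have : {w : EuclideanSpace ℂ (Fin n) |
        ∀ i, ‖MvPolynomial.eval (fun i' => w i') (pderiv i p)‖
          ≤ ‖MvPolynomial.eval (fun i' => w i') (pderiv j p)‖}
        = ⋂ i, {w : EuclideanSpace ℂ (Fin n) |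
            ‖MvPolynomial.eval (fun i' => w i') (pderiv i p)‖
              ≤ ‖MvPolynomial.eval (fun i' => w i') (pderiv j p)‖} := by
      ext w; simp
    rw [this]
    refine MeasurableSet.iInter (fun i => ?_)
    exact measurableSet_le ((continuous_evalp (pderiv i p)).norm.measurable)
      ((continuous_evalp (pderiv j p)).norm.measurable)
  exact h1.inter (h2.inter h3)

lemma Sj_bound (p : MvPolynomial (Fin n) ℂ) (j : Fin n) :
    ∃ c : ℝ≥0, ∀ (z : EuclideanSpace ℂ (Fin n)) (r : ℝ), 0 ≤ r →
      μH[((2*n-2 : ℕ) : ℝ)] (Sj p j ∩ Metric.ball z r)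
        ≤ c * ENNReal.ofReal ((2*r)^(2*n-2)) := by
  classical
  obtain ⟨cH, hcH⟩ := hyperplane_bound n j
  set cK : ℝ≥0 := ⟨2*(n:ℝ)+2, by positivity⟩ with hcK
  refine ⟨cK^(2*n-2) * p.totalDegree * cH, fun z r hr => ?_⟩
  rcases (Sj p j ∩ Metric.ball z r).eq_empty_or_nonempty with hempty | hne
  · rw [hempty]; simp
  have hSne : (Sj p j).Nonempty := ⟨hne.some, hne.some_mem.1⟩
  -- choose radii
  have hradii : ∀ ζ : Sj p j, ∃ ρ, 0 < ρ ∧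
      ∀ w v : EuclideanSpace ℂ (Fin n), w ∈ Metric.ball (ζ:EuclideanSpace ℂ (Fin n)) ρ →
        v ∈ Metric.ball (ζ:EuclideanSpace ℂ (Fin n)) ρ →
        MvPolynomial.eval (fun k => w k) p = 0 → MvPolynomial.eval (fun k => v k) p = 0 →
        ‖w - v‖ ≤ (2*(n:ℝ)+2) * ‖pj j w - pj j v‖ := by
    rintro ⟨ζ, hζ1, hζ2, hζ3⟩
    exact two_point_estimate p ζ j hζ2 (fun i => hζ3 i)
  choose ρ hρpos hρ using hradii
  -- countable subcover
  obtain ⟨T, hTc, hTU⟩ := TopologicalSpace.isOpen_iUnion_countable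
    (fun ζ : Sj p j => Metric.ball (ζ:EuclideanSpace ℂ (Fin n)) (ρ ζ))
    (fun ζ => Metric.isOpen_ball)
  have hTne : T.Nonempty := by
    by_contra hTe
    rw [Set.not_nonempty_iff_eq_empty] at hTe
    obtain ⟨ζ0, hζ0⟩ := hSne
    have : (ζ0 : EuclideanSpace ℂ (Fin n)) ∈ ⋃ ζ : Sj p j,
        Metric.ball (ζ:EuclideanSpace ℂ (Fin n)) (ρ ζ) := by
      exact Set.mem_iUnion.2 ⟨⟨ζ0, hζ0⟩, Metric.mem_ball_self (hρpos _)⟩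
    rw [← hTU] at this
    simp [hTe] at this
  obtain ⟨e, he⟩ := hTc.exists_eq_range hTne
  -- the cover by balls indexed by ℕ
  set B : ℕ → Set (EuclideanSpace ℂ (Fin n)) :=
    fun k => Metric.ball ((e k : Sj p j) : EuclideanSpace ℂ (Fin n)) (ρ (e k)) with hB
  have hcover : Sj p j ∩ Metric.ball z r ⊆ ⋃ k, B k := by
    intro w hw
    have h1 : w ∈ ⋃ ζ : Sj p j, Metric.ball (ζ:EuclideanSpace ℂ (Fin n)) (ρ ζ) :=
      Set.mem_iUnion.2 ⟨⟨w, hw.1⟩, Metric.mem_ball_self (hρpos _)⟩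
    rw [← hTU] at h1
    rw [Set.mem_iUnion₂] at h1
    obtain ⟨ζ, hζT, hζw⟩ := h1
    have : ζ ∈ Set.range e := he ▸ hζT
    obtain ⟨k, hk⟩ := this
    refine Set.mem_iUnion.2 ⟨k, ?_⟩
    show w ∈ Metric.ball ((e k : Sj p j) : EuclideanSpace ℂ (Fin n)) (ρ (e k))
    rw [hk]
    exact hζw
  set Q : ℕ → Set (EuclideanSpace ℂ (Fin n)) :=
    fun k => (Sj p j ∩ Metric.ball z r) ∩ B k with hQ
  set P : ℕ → Set (EuclideanSpace ℂ (Fin n)) := disjointed Q with hP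
  have hPQ : ∀ k, P k ⊆ Q k := fun k => disjointed_le Q k
  have hPunion : ⋃ k, P k = Sj p j ∩ Metric.ball z r := by
    rw [hP, iUnion_disjointed, hQ]
    rw [← Set.inter_iUnion]
    exact Set.inter_eq_self_of_subset_left hcover
  have hQmeas : ∀ k, MeasurableSet (Q k) := by
    intro k
    exact ((Sj_measurable p j).inter Metric.isOpen_ball.measurableSet).inter
      Metric.isOpen_ball.measurableSet
  have hPmeas : ∀ k, MeasurableSet (P k) := MeasurableSet.disjointed hQmeas
  have hPdisj : Pairwise (Function.onFun Disjoint P) := disjoint_disjointed Q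
  -- two-point property on each piece
  have hPtp : ∀ k, ∀ w ∈ P k, ∀ v ∈ P k, ‖w - v‖ ≤ (cK:ℝ) * ‖pj j w - pj j v‖ := by
    intro k w hw v hv
    have hwq := hPQ k hw
    have hvq := hPQ k hv
    have hcoe : (cK : ℝ) = 2*(n:ℝ)+2 := rfl
    rw [hcoe]
    exact hρ (e k) w v hwq.2 hvq.2 hwq.1.1.1 hvq.1.1.1
  -- the projected sets
  set Tk : ℕ → Set (EuclideanSpace ℂ (Fin n)) := fun k => pj j '' (P k) with hTk
  have hTkmeas : ∀ k, MeasurableSet (Tk k) := by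
    intro k
    exact (hPmeas k).image_of_continuousOn_injOn (pj j).continuous.continuousOn
      (piece_injOn j (P k) cK (hPtp k))
  set V : Set (EuclideanSpace ℂ (Fin n)) :=
    {w | w j = 0} ∩ Metric.closedBall (pj j z) r with hV
  have hVmeas : MeasurableSet V := by
    have h1 : MeasurableSet {w : EuclideanSpace ℂ (Fin n) | w j = 0} := by
      have : Continuous (fun w : EuclideanSpace ℂ (Fin n) => w j) :=
        (EuclideanSpace.proj (𝕜 := ℂ) j).continuous
      exact this.measurable (measurableSet_singleton 0)
    exact h1.inter Metric.isClosed_closedBall.measurableSet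
  have hTkV : ∀ k, Tk k ⊆ V := by
    rintro k y ⟨w, hw, rfl⟩
    constructor
    · rw [Set.mem_setOf_eq, pj_apply]; simp
    · rw [Metric.mem_closedBall]
      have h1 : pj j w - pj j z = pj j (w - z) := (map_sub (pj j) w z).symm
      rw [dist_eq_norm, h1]
      refine le_trans (norm_pj_le j _) ?_
      rw [← dist_eq_norm]
      exact le_of_lt ((hPQ k hw).1.2)
  -- multiplicity bound
  have hmult : ∀ y, ∀ F : Finset ℕ, (∀ i ∈ F, y ∈ Tk i) → F.card ≤ p.totalDegree := by
    intro y F hF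
    rcases F.eq_empty_or_nonempty with hFe | hFne
    · simp [hFe]
    have hy : ∀ i ∈ F, ∃ w, w ∈ P i ∧ pj j w = y := by
      intro i hi
      obtain ⟨w, hw, hwy⟩ := hF i hi
      exact ⟨w, hw, hwy⟩
    -- choose witnesses
    choose wit hwitP hwity using hy
    set y' : Fin n → ℂ := fun i => y i with hy'
    -- the witness coordinates are roots of the specialization
    have hcoord : ∀ i (hi : i ∈ F), (fun i' => (wit i hi) i')
        = fun i' => if i' = j then (wit i hi) j else y' i' := by
      intro i hi
      funext i'
      by_cases h : i' = j
      · rw [h]; simp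
      · rw [if_neg h]
        have h2 : pj j (wit i hi) i' = (wit i hi) i' := by rw [pj_apply, if_neg h]
        calc (wit i hi) i' = pj j (wit i hi) i' := h2.symm
          _ = y i' := by rw [hwity i hi]
          _ = y' i' := rfl
    have hphi_ne : phi p j y' ≠ 0 := by
      obtain ⟨i0, hi0⟩ := hFne
      intro habs
      have hd := phi_derivative p j y'
      rw [habs] at hd
      simp only [map_zero] at hd
      have h2 := phi_eval (pderiv j p) j y' ((wit i0 hi0) j)
      rw [← hd] at h2
      simp only [Polynomial.derivative_zero, Polynomial.eval_zero] at h2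
      have h3 := (hPQ i0 (hwitP i0 hi0)).1.1.2.1
      rw [← hcoord i0 hi0] at h2
      exact h3 h2.symm
    have hroot : ∀ i (hi : i ∈ F), (wit i hi) j ∈ (phi p j y').roots.toFinset := by
      intro i hi
      rw [Multiset.mem_toFinset, Polynomial.mem_roots hphi_ne]
      have h2 := phi_eval p j y' ((wit i hi) j)
      rw [← hcoord i hi] at h2
      have h3 := (hPQ i (hwitP i hi)).1.1.1
      rw [Polynomial.IsRoot, h2]
      exact h3
    -- injectivity
    have hinj : ∀ i (hi : i ∈ F), ∀ i' (hi' : i' ∈ F),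
        (wit i hi) j = (wit i' hi') j → i = i' := by
      intro i hi i' hi' heq
      by_contra hne2
      have hweq : wit i hi = wit i' hi' := by
        ext i''
        by_cases h : i'' = j
        · rw [h, heq]
        · have e1 : pj j (wit i hi) i'' = (wit i hi) i'' := by rw [pj_apply, if_neg h]
          have e2 : pj j (wit i' hi') i'' = (wit i' hi') i'' := by rw [pj_apply, if_neg h]
          rw [← e1, ← e2, hwity i hi, hwity i' hi']
      have := hPdisj hne2
      rw [Function.onFun, Set.disjoint_left] at this
      exact this (hwitP i hi) (hweq ▸ hwitP i' hi')
    -- conclude via card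
    calc F.card = (F.attach).card := (Finset.card_attach).symm
      _ ≤ (phi p j y').roots.toFinset.card := by
          refine Finset.card_le_card_of_injOn (fun i => (wit i.1 i.2) j)
            (fun i _ => hroot i.1 i.2) ?_
          intro a _ b _ hab
          exact Subtype.ext (hinj a.1 a.2 b.1 b.2 hab)
      _ ≤ p.totalDegree := phi_card_roots p j y'
  -- put everything together
  have hchain : μH[((2*n-2 : ℕ) : ℝ)] (Sj p j ∩ Metric.ball z r)
      ≤ (cK:ℝ≥0∞)^((2*n-2 : ℕ) : ℝ) * ((p.totalDegree : ℝ≥0∞) * μH[((2*n-2 : ℕ) : ℝ)] V) := by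
    rw [← hPunion]
    calc μH[((2*n-2 : ℕ) : ℝ)] (⋃ k, P k) ≤ ∑' k, μH[((2*n-2 : ℕ) : ℝ)] (P k) :=
          measure_iUnion_le P
      _ ≤ ∑' k, (cK:ℝ≥0∞)^((2*n-2 : ℕ) : ℝ) * μH[((2*n-2 : ℕ) : ℝ)] (Tk k) := by
          refine ENNReal.tsum_le_tsum (fun k => ?_)
          exact piece_bound j (P k) cK (hPtp k) _ (by positivity)
      _ = (cK:ℝ≥0∞)^((2*n-2 : ℕ) : ℝ) * ∑' k, μH[((2*n-2 : ℕ) : ℝ)] (Tk k) :=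
          ENNReal.tsum_mul_left
      _ ≤ (cK:ℝ≥0∞)^((2*n-2 : ℕ) : ℝ) * ((p.totalDegree : ℝ≥0∞) * μH[((2*n-2 : ℕ) : ℝ)] V) := by
          refine mul_le_mul_right ?_ _
          exact tsum_measure_le_mult _ Tk V hTkmeas hTkV hVmeas p.totalDegree hmult
  have hVbound : μH[((2*n-2 : ℕ) : ℝ)] V ≤ cH * ENNReal.ofReal ((2*r)^(2*n-2)) := by
    refine hcH (pj j z) ?_ r hr
    rw [pj_apply]; simp
  calc μH[((2*n-2 : ℕ) : ℝ)] (Sj p j ∩ Metric.ball z r)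
      ≤ (cK:ℝ≥0∞)^((2*n-2 : ℕ) : ℝ) * ((p.totalDegree : ℝ≥0∞) * μH[((2*n-2 : ℕ) : ℝ)] V) :=
        hchain
    _ ≤ (cK:ℝ≥0∞)^((2*n-2 : ℕ) : ℝ) * ((p.totalDegree : ℝ≥0∞)
          * (cH * ENNReal.ofReal ((2*r)^(2*n-2)))) := by
        refine mul_le_mul_right (mul_le_mul_right hVbound _) _
    _ = ((cK^(2*n-2) * p.totalDegree * cH : ℝ≥0) : ℝ≥0∞) * ENNReal.ofReal ((2*r)^(2*n-2)) := by
        rw [ENNReal.coe_mul, ENNReal.coe_mul, ENNReal.coe_pow, ← ENNReal.rpow_natCast]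
        push_cast
        ring

lemma eq_C_of_totalDegree_zero {n : ℕ} (q : MvPolynomial (Fin n) ℂ) (h : q.totalDegree = 0) :
    q = C (coeff 0 q) := by
  ext m
  rw [coeff_C]
  by_cases hm : m = 0
  · subst hm; simp
  · rw [if_neg (Ne.symm hm)]
    by_contra hne
    have hmem : m ∈ q.support := mem_support_iff.2 hne
    have := (totalDegree_eq_zero_iff _ q).1 h m hmem
    exact hm (Finsupp.ext this)

theorem main_aux (n : ℕ) (hn : 1 ≤ n) :
    ∀ d : ℕ, 0 < d → ∀ p : MvPolynomial (Fin n) ℂ, p.totalDegree = d →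
    ∃ C : ℝ, 0 < C ∧ ∀ (z : EuclideanSpace ℂ (Fin n)) (r : ℝ), 1 ≤ r →
      μH[((2 * n - 2 : ℕ) : ℝ)]
          ({w : EuclideanSpace ℂ (Fin n) | MvPolynomial.eval (fun i => w i) p = 0} ∩
            Metric.ball z r)
        ≤ ENNReal.ofReal (C * r ^ (2 * n - 2)) := by
  intro d
  induction d using Nat.strong_induction_on with
  | _ d IH =>
    intro hd p hpd
    classical
    set Z : Set (EuclideanSpace ℂ (Fin n)) :=
      {w | MvPolynomial.eval (fun i => w i) p = 0} with hZ
    set S0 : Set (EuclideanSpace ℂ (Fin n)) :=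
      {w | MvPolynomial.eval (fun i => w i) p = 0
        ∧ ∀ i, MvPolynomial.eval (fun i' => w i') (pderiv i p) = 0} with hS0def
    obtain ⟨j0, hj0⟩ := exists_pderiv_ne_zero p (by rw [hpd]; exact hd)
    -- bound for the critical part S0
    have hS0bnd : ∃ C0 : ℝ, 0 < C0 ∧ ∀ (z : EuclideanSpace ℂ (Fin n)) (r : ℝ), 1 ≤ r →
        μH[((2 * n - 2 : ℕ) : ℝ)] (S0 ∩ Metric.ball z r)
          ≤ ENNReal.ofReal (C0 * r ^ (2 * n - 2)) := by
      rcases Nat.eq_zero_or_pos (pderiv j0 p).totalDegree with h0 | hpos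
      · refine ⟨1, one_pos, fun z r hr => ?_⟩
        have hc : coeff 0 (pderiv j0 p) ≠ 0 := by
          intro habs
          apply hj0
          rw [eq_C_of_totalDegree_zero _ h0, habs, map_zero]
        have hempty : S0 ∩ Metric.ball z r = ∅ := by
          rw [Set.eq_empty_iff_forall_notMem]
          rintro w ⟨⟨_, hall⟩, _⟩
          have h1 := hall j0
          rw [eq_C_of_totalDegree_zero _ h0] at h1
          rw [eval_C] at h1
          exact hc h1
        rw [hempty, measure_empty]
        exact zero_le
      · have hqlt : (pderiv j0 p).totalDegree < d := by
          rw [← hpd]; exact totalDegree_pderiv_lt p (by rw [hpd]; exact hd) j0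
        obtain ⟨C0, hC0pos, hC0⟩ := IH _ hqlt hpos (pderiv j0 p) rfl
        refine ⟨C0, hC0pos, fun z r hr => ?_⟩
        refine le_trans (measure_mono ?_) (hC0 z r hr)
        rintro w ⟨⟨_, hall⟩, hball⟩
        exact ⟨hall j0, hball⟩
    obtain ⟨C0, hC0pos, hC0⟩ := hS0bnd
    -- bounds for the S_j's
    choose cj hcj using fun j : Fin n => Sj_bound p j
    -- covering
    have hnefin : Nonempty (Fin n) := ⟨⟨0, hn⟩⟩
    have hcover : ∀ (z : EuclideanSpace ℂ (Fin n)) (r : ℝ),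
        Z ∩ Metric.ball z r ⊆ (S0 ∩ Metric.ball z r) ∪ ⋃ j, (Sj p j ∩ Metric.ball z r) := by
      intro z r w hw
      by_cases hall : ∀ i, MvPolynomial.eval (fun i' => w i') (pderiv i p) = 0
      · exact Or.inl ⟨⟨hw.1, hall⟩, hw.2⟩
      · push_neg at hall
        obtain ⟨i1, hi1⟩ := hall
        obtain ⟨jm, _, hjm⟩ := Finset.univ.exists_max_image
          (fun i => ‖MvPolynomial.eval (fun i' => w i') (pderiv i p)‖) Finset.univ_nonempty
        have hjmne : MvPolynomial.eval (fun i' => w i') (pderiv jm p) ≠ 0 := by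
          intro habs
          have h1 := hjm i1 (Finset.mem_univ i1)
          rw [habs, norm_zero] at h1
          exact hi1 (norm_le_zero_iff.1 h1)
        refine Or.inr (Set.mem_iUnion.2 ⟨jm, ⟨⟨hw.1, hjmne, ?_⟩, hw.2⟩⟩)
        exact fun i => hjm i (Finset.mem_univ i)
    -- the final constant
    refine ⟨C0 + (∑ j : Fin n, ((cj j : ℝ))) * 2^(2*n-2) + 1, by positivity, fun z r hr => ?_⟩
    have hr0 : (0:ℝ) ≤ r := le_trans zero_le_one hr
    have hrm : (0:ℝ) ≤ r ^ (2*n-2) := by positivity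
    calc μH[((2 * n - 2 : ℕ) : ℝ)] (Z ∩ Metric.ball z r)
        ≤ μH[((2 * n - 2 : ℕ) : ℝ)]
            ((S0 ∩ Metric.ball z r) ∪ ⋃ j, (Sj p j ∩ Metric.ball z r)) :=
          measure_mono (hcover z r)
      _ ≤ μH[((2 * n - 2 : ℕ) : ℝ)] (S0 ∩ Metric.ball z r)
            + μH[((2 * n - 2 : ℕ) : ℝ)] (⋃ j, (Sj p j ∩ Metric.ball z r)) :=
          measure_union_le _ _
      _ ≤ ENNReal.ofReal (C0 * r ^ (2*n-2))
            + ∑ j : Fin n, μH[((2 * n - 2 : ℕ) : ℝ)] (Sj p j ∩ Metric.ball z r) :=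
          add_le_add (hC0 z r hr) (measure_iUnion_fintype_le _ _)
      _ ≤ ENNReal.ofReal (C0 * r ^ (2*n-2))
            + ∑ j : Fin n, (cj j : ℝ≥0∞) * ENNReal.ofReal ((2*r)^(2*n-2)) :=
          add_le_add le_rfl (Finset.sum_le_sum (fun j _ => hcj j z r hr0))
      _ = ENNReal.ofReal (C0 * r ^ (2*n-2))
            + ((∑ j : Fin n, cj j : ℝ≥0) : ℝ≥0∞) * ENNReal.ofReal ((2*r)^(2*n-2)) := by
          rw [← Finset.sum_mul, ENNReal.coe_finset_sum]
      _ = ENNReal.ofReal (C0 * r ^ (2*n-2)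
            + ((∑ j : Fin n, cj j : ℝ≥0) : ℝ) * (2*r)^(2*n-2)) := by
          rw [← ENNReal.ofReal_coe_nnreal, ← ENNReal.ofReal_mul (NNReal.coe_nonneg _),
            ← ENNReal.ofReal_add (mul_nonneg hC0pos.le hrm)
              (mul_nonneg (NNReal.coe_nonneg _) (pow_nonneg (by linarith) _))]
      _ ≤ ENNReal.ofReal ((C0 + (∑ j : Fin n, ((cj j : ℝ))) * 2^(2*n-2) + 1) * r ^ (2*n-2)) := by
          refine ENNReal.ofReal_le_ofReal ?_
          have hsum : ((∑ j : Fin n, cj j : ℝ≥0) : ℝ) = ∑ j : Fin n, (cj j : ℝ) := by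
            push_cast; rfl
          rw [hsum, mul_pow]
          have hS : (0:ℝ) ≤ ∑ j : Fin n, (cj j : ℝ) :=
            Finset.sum_nonneg (fun j _ => NNReal.coe_nonneg (cj j))
          nlinarith [hrm, hS]


/-- If `p` is a nonconstant polynomial on `ℂⁿ` with zero set `Z`, then the
`(2n-2)`-dimensional Hausdorff measure (w.r.t. the Euclidean metric) of `Z ∩ B_r(z)`
is `O(r^{2n-2})`, uniformly in `z`, for `r ≥ 1`. -/
theorem statement4 (n : ℕ) (hn : 1 ≤ n) (p : MvPolynomial (Fin n) ℂ)
    (hp : 0 < p.totalDegree) :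
    ∃ C : ℝ, 0 < C ∧ ∀ (z : EuclideanSpace ℂ (Fin n)) (r : ℝ), 1 ≤ r →
      μH[((2 * n - 2 : ℕ) : ℝ)]
          ({w : EuclideanSpace ℂ (Fin n) | MvPolynomial.eval (fun i => w i) p = 0} ∩
            Metric.ball z r)
        ≤ ENNReal.ofReal (C * r ^ (2 * n - 2)) := by
  exact main_aux n hn p.totalDegree hp p rfl
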